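/- Let {M_j} be a finite collection of Hermitian n×n matrices and suppose a nontrivial subspace V ⊆ ℂⁿ is minimal with respect to Span_ℝ{M_j}. Then there exists a positive semi-definite Hermitian matrix N with Ran(N) = V and Tr(M_jN) = 0 for all j; moreover, any nonzero positive semi-definite Hermitian N' with Ran(N') ⊆ V and Tr(M_jN') = 0 for all j satisfies Ran(N') = V. -/

import Mathlib

open Matrix
open scoped ComplexOrder

/-- Positive definite on a subspace `V ⊆ ℂⁿ`. -/
def PosDefOn {n : ℕ} (M : Matrix (Fin n) (Fin n) ℂ)
    (V : Submodule ℂ (Fin n → ℂ)) : Prop :=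
  ∀ v ∈ V, v ≠ 0 → 0 < (star v ⬝ᵥ (M *ᵥ v)).re

/-- `Span_ℝ {M j}` is indefinite on `V`. -/
def IndefiniteOn {n m : ℕ} (M : Fin m → Matrix (Fin n) (Fin n) ℂ)
    (V : Submodule ℂ (Fin n → ℂ)) : Prop :=
  ¬ ∃ a : Fin m → ℝ, PosDefOn (∑ j, a j • M j) V

namespace MSPRaux

variable {n : ℕ}

open scoped MatrixOrder

lemma real_smul_matrix (r : ℝ) (X : Matrix (Fin n) (Fin n) ℂ) :
    r • X = (r : ℂ) • X := by
  ext i j; simp [Complex.real_smul]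

lemma real_smul_vec (r : ℝ) (x : Fin n → ℂ) : r • x = (r : ℂ) • x := by
  funext i; simp [Complex.real_smul]

lemma vecMulVec_star_mulVec (v x : Fin n → ℂ) :
    vecMulVec v (star v) *ᵥ x = (star v ⬝ᵥ x) • v := by
  funext i
  simp only [Matrix.mulVec, vecMulVec_apply, dotProduct, Pi.smul_apply, smul_eq_mul,
    Finset.sum_mul, Pi.star_apply]
  exact Finset.sum_congr rfl fun j _ => by ring

lemma star_dp_self_nonneg (w : Fin n → ℂ) : 0 ≤ star w ⬝ᵥ w := by
  simp only [dotProduct, Pi.star_apply]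
  refine Finset.sum_nonneg fun i _ => ?_
  rw [RCLike.star_def, Complex.conj_mul']
  positivity

lemma posSemidef_outer (v : Fin n → ℂ) : (vecMulVec v (star v)).PosSemidef := by
  rw [posSemidef_iff_dotProduct_mulVec]
  constructor
  · ext i j
    simp [conjTranspose_apply, vecMulVec_apply, mul_comm]
  · intro x
    rw [vecMulVec_star_mulVec]
    have h1 : star x ⬝ᵥ ((star v ⬝ᵥ x) • v) = (star v ⬝ᵥ x) * (star x ⬝ᵥ v) := by
      simp [dotProduct, Finset.mul_sum, Finset.sum_mul]
      exact Finset.sum_congr rfl fun j _ => Finset.sum_congr rfl fun k _ => by ring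
    rw [h1, star_dotProduct]
    exact star_mul_self_nonneg _

lemma trace_mul_outer (A : Matrix (Fin n) (Fin n) ℂ) (v : Fin n → ℂ) :
    (A * vecMulVec v (star v)).trace = star v ⬝ᵥ (A *ᵥ v) := by
  simp only [Matrix.trace, Matrix.diag, Matrix.mul_apply, vecMulVec_apply, dotProduct,
    Matrix.mulVec, Pi.star_apply, Finset.mul_sum]
  exact Finset.sum_congr rfl fun i _ => Finset.sum_congr rfl fun k _ => by ring


lemma range_sqrt_eq (N : Matrix (Fin n) (Fin n) ℂ) (hN : N.PosSemidef) :
    LinearMap.range (CFC.sqrt N).mulVecLin = LinearMap.range N.mulVecLin := by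
  classical
  set S := CFC.sqrt N with hSdef
  have hSS : S * S = N := CFC.sqrt_mul_sqrt_self N hN.nonneg
  have hSh : S.IsHermitian := (Matrix.nonneg_iff_posSemidef.mp (CFC.sqrt_nonneg N)).isHermitian
  have hle : LinearMap.range N.mulVecLin ≤ LinearMap.range S.mulVecLin := by
    rintro y ⟨x, rfl⟩
    exact ⟨S *ᵥ x, by simp [Matrix.mulVecLin_apply, ← hSS, Matrix.mulVec_mulVec]⟩
  have hker : LinearMap.ker N.mulVecLin = LinearMap.ker S.mulVecLin := by
    ext x
    simp only [LinearMap.mem_ker, Matrix.mulVecLin_apply]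
    constructor
    · intro hx
      have key : star (S *ᵥ x) ⬝ᵥ (S *ᵥ x) = star x ⬝ᵥ (N *ᵥ x) := by
        rw [star_mulVec, hSh.eq, ← Matrix.dotProduct_mulVec, Matrix.mulVec_mulVec, hSS]
      rw [hx] at key
      simp only [dotProduct_zero] at key
      exact dotProduct_star_self_eq_zero.mp key
    · intro hx
      rw [← hSS, ← Matrix.mulVec_mulVec, hx, Matrix.mulVec_zero]
  have h1 := LinearMap.finrank_range_add_finrank_ker N.mulVecLin
  have h2 := LinearMap.finrank_range_add_finrank_ker S.mulVecLin
  rw [hker] at h1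
  exact (Submodule.eq_of_le_of_finrank_eq hle (by omega)).symm

/-- Key positivity lemma: if `A` is positive on the range of a nonzero PSD `N`,
then `Re (tr (A N)) > 0`. -/
lemma trace_re_pos {A N : Matrix (Fin n) (Fin n) ℂ} (hN : N.PosSemidef) (hN0 : N ≠ 0)
    (hpos : ∀ v, v ∈ LinearMap.range N.mulVecLin → v ≠ 0 →
      0 < (star v ⬝ᵥ (A *ᵥ v)).re) :
    0 < ((A * N).trace).re := by
  classical
  set S := CFC.sqrt N with hSdef
  have hSS : S * S = N := CFC.sqrt_mul_sqrt_self N hN.nonneg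
  have hSh : S.IsHermitian := (Matrix.nonneg_iff_posSemidef.mp (CFC.sqrt_nonneg N)).isHermitian
  have hrow : ∀ k, star (Sᵀ k) = S k := by
    intro k
    funext i
    simp only [Pi.star_apply, transpose_apply]
    exact hSh.apply k i
  have htr : (A * N).trace = ∑ k, star (Sᵀ k) ⬝ᵥ (A *ᵥ (Sᵀ k)) := by
    have hterm : ∀ k, star (Sᵀ k) ⬝ᵥ (A *ᵥ (Sᵀ k)) = (S * (A * S)) k k := by
      intro k
      rw [hrow]
      simp only [Matrix.mul_apply, dotProduct, Matrix.mulVec, transpose_apply]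
    rw [← hSS, ← Matrix.mul_assoc, Matrix.trace_mul_comm, Matrix.trace]
    simp only [Matrix.diag]
    exact (Finset.sum_congr rfl fun k _ => (hterm k)).symm
  have hmem : ∀ k, Sᵀ k ∈ LinearMap.range N.mulVecLin := by
    intro k
    rw [← range_sqrt_eq N hN]
    exact ⟨Pi.single k 1, by rw [Matrix.mulVecLin_apply, Matrix.mulVec_single_one]; rfl⟩
  have hex : ∃ k, Sᵀ k ≠ (0 : Fin n → ℂ) := by
    by_contra h
    push_neg at h
    apply hN0
    rw [← hSS]
    have : S = 0 := by
      ext i k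
      have := congrFun (h k) i
      simpa [transpose_apply] using this
    simp [this]
  obtain ⟨k₀, hk₀⟩ := hex
  rw [htr, Complex.re_sum]
  refine Finset.sum_pos' (fun k _ => ?_) ⟨k₀, Finset.mem_univ _, hpos _ (hmem k₀) hk₀⟩
  by_cases h : Sᵀ k = 0
  · simp [h]
  · exact le_of_lt (hpos _ (hmem k) h)


lemma diag_entry (N : Matrix (Fin n) (Fin n) ℂ) (i : Fin n) :
    star (Pi.single i 1 : Fin n → ℂ) ⬝ᵥ (N *ᵥ Pi.single i 1) = N i i := by
  have hs : star (Pi.single i 1 : Fin n → ℂ) = Pi.single i 1 := by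
    funext k
    simp [Pi.single_apply, apply_ite (star : ℂ → ℂ)]
  rw [hs, Matrix.mulVec_single_one, single_dotProduct, one_mul, Matrix.col_apply]

lemma diag_nonneg {N : Matrix (Fin n) (Fin n) ℂ} (hN : N.PosSemidef) (i : Fin n) :
    0 ≤ N i i := by
  have := hN.dotProduct_mulVec_nonneg (Pi.single i 1)
  rwa [diag_entry] at this

lemma abs_entry_le {N : Matrix (Fin n) (Fin n) ℂ} (hN : N.PosSemidef) (i j : Fin n) :
    ‖N i j‖ ≤ (N i i).re + (N j j).re := by
  have hii := diag_nonneg hN i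
  have hjj := diag_nonneg hN j
  have hiire : 0 ≤ (N i i).re := (Complex.nonneg_iff.mp hii).1
  have hjjre : 0 ≤ (N j j).re := (Complex.nonneg_iff.mp hjj).1
  by_cases hij : N i j = 0
  · simp only [hij, map_zero, norm_zero]
    positivity
  by_cases hije : i = j
  · subst hije
    have him : (N i i).im = 0 := (Complex.nonneg_iff.mp hii).2.symm
    have : N i i = ((N i i).re : ℂ) := by
      exact Complex.ext rfl (by simpa using him)
    rw [this, Complex.norm_real, Real.norm_eq_abs, abs_of_nonneg hiire]
    simp only [Complex.ofReal_re]
    linarith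
  set a : ℝ := ‖N i j‖ with ha
  have ha0 : 0 < a := norm_pos_iff.mpr hij
  set c : ℂ := -((a : ℂ) / N i j) with hc
  have hc1 : c * N i j = -(a : ℂ) := by
    rw [hc, neg_mul, div_mul_cancel₀ _ hij]
  have hNji : N j i = star (N i j) := (hN.1.apply j i).symm
  have hc2 : star c * N j i = -(a : ℂ) := by
    rw [hNji, ← star_mul', hc1]
    simp
  have hc3 : star c * c = 1 := by
    rw [RCLike.star_def, Complex.conj_mul']
    have hnorm : ‖c‖ = 1 := by
      rw [hc, norm_neg, norm_div, Complex.norm_real, Real.norm_eq_abs,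
        abs_of_nonneg ha0.le, ← ha, div_self ha0.ne']
    rw [hnorm]
    norm_num
  set v : Fin n → ℂ := (Pi.single i 1 : Fin n → ℂ) + c • (Pi.single j 1 : Fin n → ℂ) with hv
  have hstarv : star v = (Pi.single i 1 : Fin n → ℂ) + star c • (Pi.single j 1 : Fin n → ℂ) := by
    funext k
    simp [hv, Pi.single_apply, apply_ite (star : ℂ → ℂ)]
  have hq : star v ⬝ᵥ (N *ᵥ v) =
      N i i + c * N i j + (star c * N j i + star c * (c * N j j)) := by
    rw [hv, hstarv]
    simp only [Matrix.mulVec_add, Matrix.mulVec_smul, add_dotProduct, smul_dotProduct,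
      dotProduct_add, dotProduct_smul, Matrix.mulVec_single_one, single_dotProduct,
      smul_eq_mul, one_mul, transpose_apply, Matrix.col_apply]
    ring
  have hq2 : star v ⬝ᵥ (N *ᵥ v) = N i i + N j j - 2 * (a : ℂ) := by
    rw [hq, hc1, hc2, ← mul_assoc, hc3, one_mul]
    ring
  have h0 := hN.dotProduct_mulVec_nonneg v
  rw [hq2] at h0
  have hre := (Complex.nonneg_iff.mp h0).1
  simp only [Complex.sub_re, Complex.add_re, Complex.mul_re, Complex.ofReal_re,
    Complex.ofReal_im, Complex.re_ofNat, Complex.im_ofNat] at hre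
  linarith


lemma isHermitian_real_smul {X : Matrix (Fin n) (Fin n) ℂ} (h : X.IsHermitian) (r : ℝ) :
    (r • X).IsHermitian := by
  rw [Matrix.IsHermitian, Matrix.conjTranspose_smul, h.eq]
  simp

lemma real_mul_nonneg {c : ℝ} (hc : 0 ≤ c) {z : ℂ} (hz : 0 ≤ z) : 0 ≤ (c : ℂ) * z := by
  rw [Complex.nonneg_iff] at hz ⊢
  constructor
  · simp only [Complex.mul_re, Complex.ofReal_re, Complex.ofReal_im, zero_mul, sub_zero]
    exact mul_nonneg hc hz.1
  · simp only [Complex.mul_im, Complex.ofReal_re, Complex.ofReal_im, zero_mul, add_zero,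
      ← hz.2, mul_zero]

end MSPRaux

open MSPRaux in
/-- Lemma 4.3 + Lemma 4.5: if `V` is minimal with respect to `Span_ℝ {M j}`,
then there is a PSD matrix `N` with `Ran(N) = V` orthogonal to all `M j`;
moreover every nonzero PSD matrix `N'` with range in `V` orthogonal to all
`M j` has range equal to `V`. -/
theorem minimal_subspace_psd_range {n m : ℕ}
    (M : Fin m → Matrix (Fin n) (Fin n) ℂ) (hM : ∀ j, (M j).IsHermitian)
    (V : Submodule ℂ (Fin n → ℂ)) (hV : V ≠ ⊥)
    (hmin : IndefiniteOn M V ∧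
      ∀ W : Submodule ℂ (Fin n → ℂ), W ≠ ⊥ → W < V → ¬ IndefiniteOn M W) :
    (∃ N : Matrix (Fin n) (Fin n) ℂ, N.PosSemidef ∧
      LinearMap.range N.mulVecLin = V ∧ ∀ j, (M j * N).trace = 0) ∧
    (∀ N' : Matrix (Fin n) (Fin n) ℂ, N'.PosSemidef → N' ≠ 0 →
      LinearMap.range N'.mulVecLin ≤ V → (∀ j, (M j * N').trace = 0) →
      LinearMap.range N'.mulVecLin = V) := by
  classical
  obtain ⟨hindef, hminimal⟩ := hmin
  -- Part 2
  have part2 : ∀ N' : Matrix (Fin n) (Fin n) ℂ, N'.PosSemidef → N' ≠ 0 →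
      LinearMap.range N'.mulVecLin ≤ V → (∀ j, (M j * N').trace = 0) →
      LinearMap.range N'.mulVecLin = V := by
    intro N' hPSD hne hle htr
    by_contra hneq
    have hlt : LinearMap.range N'.mulVecLin < V := lt_of_le_of_ne hle hneq
    have hbot : LinearMap.range N'.mulVecLin ≠ ⊥ := by
      intro h
      apply hne
      have h0 : N'.mulVecLin = 0 := LinearMap.range_eq_bot.mp h
      ext i j
      have h1 := congrFun (congrFun (congrArg DFunLike.coe h0) (Pi.single j 1)) i
      simpa [Matrix.mulVecLin_apply, Matrix.mulVec_single_one] using h1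
    have hnotindef := hminimal _ hbot hlt
    rw [IndefiniteOn, not_not] at hnotindef
    obtain ⟨a, hpos⟩ := hnotindef
    have hkey := MSPRaux.trace_re_pos hPSD hne (fun v hv hv0 => hpos v hv hv0)
    have htrA : ((∑ j, a j • M j) * N').trace = 0 := by
      rw [Finset.sum_mul, Matrix.trace_sum]
      refine Finset.sum_eq_zero fun j _ => ?_
      rw [Matrix.smul_mul, Matrix.trace_smul, htr j, smul_zero]
    rw [htrA] at hkey
    simp at hkey
  refine ⟨?_, part2⟩
  -- Part 1
  set Cset : Set (Matrix (Fin n) (Fin n) ℂ) :=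
    {N | N.PosSemidef ∧ (∀ x, N *ᵥ x ∈ V) ∧ N.trace = 1} with hCset
  set φ : Matrix (Fin n) (Fin n) ℂ →ₗ[ℝ] (Fin m → ℝ) :=
    { toFun := fun N j => ((M j * N).trace).re
      map_add' := by
        intro A B
        funext j
        simp [Matrix.mul_add]
      map_smul' := by
        intro r A
        funext j
        simp [Matrix.mul_smul, Matrix.trace_smul, Complex.smul_re] } with hφ
  have hφapp : ∀ (N : Matrix (Fin n) (Fin n) ℂ) (j : Fin m),
      φ N j = ((M j * N).trace).re := fun _ _ => rfl
  -- convexity of Cset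
  have hconv : Convex ℝ Cset := by
    rintro A ⟨hA, hAV, hAtr⟩ B ⟨hB, hBV, hBtr⟩ a b ha hb hab
    have hexp : ∀ x, (a • A + b • B) *ᵥ x = a • (A *ᵥ x) + b • (B *ᵥ x) := by
      intro x
      rw [Matrix.add_mulVec, Matrix.smul_mulVec, Matrix.smul_mulVec]
    refine ⟨Matrix.PosSemidef.of_dotProduct_mulVec_nonneg ?_ ?_, ?_, ?_⟩
    · exact (isHermitian_real_smul hA.1 a).add (isHermitian_real_smul hB.1 b)
    · intro x
      rw [hexp, dotProduct_add, dotProduct_smul, dotProduct_smul]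
      have h1 := hA.dotProduct_mulVec_nonneg x
      have h2 := hB.dotProduct_mulVec_nonneg x
      rw [Complex.nonneg_iff] at h1 h2 ⊢
      constructor
      · simp only [Complex.add_re, Complex.smul_re, smul_eq_mul]
        have := mul_nonneg ha h1.1
        have := mul_nonneg hb h2.1
        linarith
      · simp only [Complex.add_im, Complex.smul_im, smul_eq_mul, ← h1.2, ← h2.2]
        simp
    · intro x
      rw [hexp]
      refine Submodule.add_mem _ ?_ ?_
      · rw [real_smul_vec]
        exact Submodule.smul_mem _ _ (hAV x)
      · rw [real_smul_vec]
        exact Submodule.smul_mem _ _ (hBV x)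
    · rw [Matrix.trace_add, Matrix.trace_smul, Matrix.trace_smul, hAtr, hBtr,
        Complex.real_smul, Complex.real_smul, mul_one, mul_one, ← Complex.ofReal_add,
        hab, Complex.ofReal_one]
  -- closedness of Cset
  have hnonnegclosed : IsClosed {z : ℂ | 0 ≤ z} := by
    have hset : {z : ℂ | 0 ≤ z} = Complex.re ⁻¹' Set.Ici 0 ∩ Complex.im ⁻¹' {0} := by
      ext z
      simp [Complex.nonneg_iff, eq_comm]
    rw [hset]
    exact (isClosed_Ici.preimage Complex.continuous_re).inter
      (isClosed_singleton.preimage Complex.continuous_im)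
  have hclosed : IsClosed Cset := by
    have hdecomp : Cset = {N : Matrix (Fin n) (Fin n) ℂ | N.IsHermitian} ∩
        ((⋂ x : Fin n → ℂ, {N : Matrix (Fin n) (Fin n) ℂ | 0 ≤ star x ⬝ᵥ (N *ᵥ x)}) ∩
        ((⋂ x : Fin n → ℂ, {N : Matrix (Fin n) (Fin n) ℂ | N *ᵥ x ∈ V}) ∩
        {N : Matrix (Fin n) (Fin n) ℂ | N.trace = 1})) := by
      ext N
      simp only [hCset, Set.mem_setOf_eq, Set.mem_inter_iff, Set.mem_iInter,
        Matrix.posSemidef_iff_dotProduct_mulVec]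
      tauto
    rw [hdecomp]
    refine (isClosed_eq (continuous_id.matrix_conjTranspose) continuous_id).inter
      ((isClosed_iInter fun x => ?_).inter ((isClosed_iInter fun x => ?_).inter
        (isClosed_eq (continuous_id.matrix_trace) continuous_const)))
    · exact hnonnegclosed.preimage
        (continuous_const.dotProduct (continuous_id.matrix_mulVec continuous_const))
    · exact (V.closed_of_finiteDimensional).preimage
        (continuous_id.matrix_mulVec continuous_const)
  -- compactness of Cset
  have hcompact : IsCompact Cset := by
    have hK : IsCompact ((Set.univ.pi fun _ : Fin n => Set.univ.pi fun _ : Fin n =>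
        Metric.closedBall (0 : ℂ) 2) : Set (Fin n → Fin n → ℂ)) :=
      isCompact_univ_pi fun _ => isCompact_univ_pi fun _ => isCompact_closedBall _ _
    refine IsCompact.of_isClosed_subset hK hclosed ?_
    rintro N ⟨hPSD, hNV, hNtr⟩
    intro i _
    intro j _
    simp only [Metric.mem_closedBall, dist_zero_right]
    have hdiagle : ∀ k, (N k k).re ≤ 1 := by
      intro k
      have hsum : ∑ l, (N l l).re = 1 := by
        have h1 := congrArg Complex.re hNtr
        simpa [Matrix.trace, Matrix.diag, Complex.re_sum] using h1
      rw [← hsum]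
      exact Finset.single_le_sum
        (fun l _ => (Complex.nonneg_iff.mp (diag_nonneg hPSD l)).1) (Finset.mem_univ k)
    calc ‖N i j‖ ≤ (N i i).re + (N j j).re := abs_entry_le hPSD i j
      _ ≤ 2 := by linarith [hdiagle i, hdiagle j]
  -- the image set
  set T : Set (Fin m → ℝ) := φ '' Cset with hT
  have hTconv : Convex ℝ T := hconv.linear_image φ
  have hφcont : Continuous fun N : Matrix (Fin n) (Fin n) ℂ => φ N := by
    refine continuous_pi fun j => ?_
    exact Complex.continuous_re.comp
      ((continuous_const.matrix_mul continuous_id).matrix_trace)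
  have hTclosed : IsClosed T := (hcompact.image hφcont).isClosed
  -- 0 ∈ T by separation
  have h0T : (0 : Fin m → ℝ) ∈ T := by
    by_contra h0
    obtain ⟨f, u, hfu, hub⟩ := geometric_hahn_banach_point_closed hTconv hTclosed h0
    have hu0 : 0 < u := by simpa using hfu
    set a : Fin m → ℝ := fun j => f (Pi.single j 1) with haf
    have hfrep : ∀ y : Fin m → ℝ, f y = ∑ j, y j * a j := by
      intro y
      have hy : y = ∑ j, y j • (Pi.single j (1 : ℝ) : Fin m → ℝ) := by
        funext k
        simp [Pi.single_apply, Finset.sum_apply, mul_ite, Finset.sum_ite_eq']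
      conv_lhs => rw [hy]
      rw [map_sum]
      exact Finset.sum_congr rfl fun j _ => by rw [f.map_smul]; simp [haf]
    apply hindef
    refine ⟨a, fun v hvV hv0 => ?_⟩
    set r : ℝ := ∑ i, Complex.normSq (v i) with hr
    have hrpos : 0 < r := by
      obtain ⟨i, hi⟩ := Function.ne_iff.mp hv0
      exact Finset.sum_pos' (fun k _ => Complex.normSq_nonneg _)
        ⟨i, Finset.mem_univ _, Complex.normSq_pos.mpr hi⟩
    set Nv : Matrix (Fin n) (Fin n) ℂ := r⁻¹ • vecMulVec v (star v) with hNv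
    have houtertr : (vecMulVec v (star v)).trace = (r : ℂ) := by
      simp only [Matrix.trace, Matrix.diag, vecMulVec_apply, Pi.star_apply, hr,
        Complex.ofReal_sum]
      exact Finset.sum_congr rfl fun i _ => by
        rw [RCLike.star_def, Complex.mul_conj]
    have hNvC : Nv ∈ Cset := by
      refine ⟨Matrix.PosSemidef.of_dotProduct_mulVec_nonneg ?_ ?_, ?_, ?_⟩
      · exact isHermitian_real_smul (posSemidef_outer v).1 r⁻¹
      · intro x
        rw [hNv, Matrix.smul_mulVec, dotProduct_smul, Complex.real_smul]
        exact real_mul_nonneg (by positivity) ((posSemidef_outer v).dotProduct_mulVec_nonneg x)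
      · intro x
        rw [hNv, Matrix.smul_mulVec, vecMulVec_star_mulVec, real_smul_vec]
        exact Submodule.smul_mem _ _ (Submodule.smul_mem _ _ hvV)
      · rw [hNv, Matrix.trace_smul, houtertr, Complex.real_smul,
          ← Complex.ofReal_mul, inv_mul_cancel₀ hrpos.ne', Complex.ofReal_one]
    have hφNv : ∀ j, φ Nv j = r⁻¹ * (star v ⬝ᵥ (M j *ᵥ v)).re := by
      intro j
      rw [hφapp]
      have htrNv : (M j * Nv).trace = r⁻¹ • (star v ⬝ᵥ (M j *ᵥ v)) := by
        rw [hNv, Matrix.mul_smul, Matrix.trace_smul, trace_mul_outer]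
      rw [htrNv, Complex.smul_re, smul_eq_mul]
    have hflt : u < r⁻¹ * ∑ j, a j * (star v ⬝ᵥ (M j *ᵥ v)).re := by
      have hmem := hub _ ⟨Nv, hNvC, rfl⟩
      rw [hfrep] at hmem
      calc u < ∑ j, φ Nv j * a j := hmem
        _ = r⁻¹ * ∑ j, a j * (star v ⬝ᵥ (M j *ᵥ v)).re := by
            rw [Finset.mul_sum]
            exact Finset.sum_congr rfl fun j _ => by rw [hφNv]; ring
    have hXpos : 0 < ∑ j, a j * (star v ⬝ᵥ (M j *ᵥ v)).re := by
      have h1 : 0 < r⁻¹ * ∑ j, a j * (star v ⬝ᵥ (M j *ᵥ v)).re := lt_trans hu0 hflt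
      have h2 := mul_pos hrpos h1
      rwa [← mul_assoc, mul_inv_cancel₀ hrpos.ne', one_mul] at h2
    -- now convert to the quadratic form of the sum matrix
    have h1 : (∑ j, a j • M j) *ᵥ v = ∑ j, a j • (M j *ᵥ v) := by
      funext i
      simp only [Matrix.mulVec, dotProduct, Finset.sum_apply, Matrix.sum_apply,
        Pi.smul_apply, Matrix.smul_apply, Complex.real_smul, Finset.sum_mul]
      rw [Finset.sum_comm]
      refine Finset.sum_congr rfl fun j _ => ?_
      rw [Finset.mul_sum]
      exact Finset.sum_congr rfl fun k _ => by ring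
    have h2 : star v ⬝ᵥ (∑ j, a j • (M j *ᵥ v)) = ∑ j, a j • (star v ⬝ᵥ (M j *ᵥ v)) := by
      simp only [dotProduct, Finset.sum_apply, Pi.smul_apply, Pi.star_apply,
        Complex.real_smul, Finset.mul_sum]
      rw [Finset.sum_comm]
      exact Finset.sum_congr rfl fun j _ => Finset.sum_congr rfl fun k _ => by ring
    rw [h1, h2, Complex.re_sum]
    simpa only [Complex.smul_re, smul_eq_mul] using hXpos
  -- extract the matrix N
  obtain ⟨N, hNC, hφN⟩ := h0T
  have hNtr1 : N.trace = 1 := hNC.2.2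
  have hne : N ≠ 0 := by
    intro h
    rw [h] at hNtr1
    simp at hNtr1
  have hle : LinearMap.range N.mulVecLin ≤ V := by
    rintro y ⟨x, rfl⟩
    exact hNC.2.1 x
  have htrR : ∀ j, (M j * N).trace = 0 := by
    intro j
    have hre : ((M j * N).trace).re = 0 := by
      have := congrFun hφN j
      simpa [hφapp] using this
    have hsa : star ((M j * N).trace) = (M j * N).trace := by
      rw [← Matrix.trace_conjTranspose, Matrix.conjTranspose_mul, hNC.1.1.eq,
        (hM j).eq, Matrix.trace_mul_comm]
    have him : ((M j * N).trace).im = 0 := by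
      have h1 := congrArg Complex.im hsa
      simp only [Complex.star_def, Complex.conj_im] at h1
      linarith
    exact Complex.ext hre him
  exact ⟨N, hNC.1, part2 N hNC.1 hne hle htrR, htrR⟩
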